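/- For every sign ε ∈ {−1,+1}, T_ε is Lipschitz with constant κ on J₋ and S_ε is Lipschitz with constant κ on J₊. Consequently, for every n ≥ 1, all signs ε₀,…,ε_{n−1} ∈ {−1,+1}, and all v, v′ ∈ [−θ₀, θ₀], |(T_{ε₀}∘T_{ε₁}∘⋯∘T_{ε_{n−1}})(v) − (T_{ε₀}∘⋯∘T_{ε_{n−1}})(v′)| ≤ κⁿ·|v − v′|; and analogously for all u, u′ ∈ J₊, |(S_{ε₀}∘⋯∘S_{ε_{n−1}})(u) − (S_{ε₀}∘⋯∘S_{ε_{n−1}})(u′)| ≤ κⁿ·|u − u′|. -/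

import Mathlib

noncomputable section

/-- `θ₀ = α − √(α² + 2α − 2)`. -/
def theta0 (α : ℝ) : ℝ := α - Real.sqrt (α ^ 2 + 2 * α - 2)

/-- `κ = (α − √(α² + 2α − 2))/(α + √(α² + 2α − 2))`. -/
def kappa (α : ℝ) : ℝ :=
  (α - Real.sqrt (α ^ 2 + 2 * α - 2)) / (α + Real.sqrt (α ^ 2 + 2 * α - 2))

/-- The Möbius map `T_ε(v) = 2(1−α)/(−2α + εv)` acting on stable directions. -/
def Tmap (α ε v : ℝ) : ℝ := 2 * (1 - α) / (-2 * α + ε * v)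

/-- The Möbius map `S_ε(u) = ε/(2u(1−α) + 2α)` acting on unstable directions. -/
def Smap (α ε u : ℝ) : ℝ := ε / (2 * u * (1 - α) + 2 * α)

/-- `Titer α ε n = T_{ε 0} ∘ T_{ε 1} ∘ ⋯ ∘ T_{ε (n−1)}`. -/
def Titer (α : ℝ) : (ℕ → ℝ) → ℕ → ℝ → ℝ
  | _, 0 => id
  | ε, n + 1 => fun v => Tmap α (ε 0) (Titer α (fun k => ε (k + 1)) n v)

/-- `Siter α η n = S_{η 0} ∘ S_{η 1} ∘ ⋯ ∘ S_{η (n−1)}`. -/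
def Siter (α : ℝ) : (ℕ → ℝ) → ℕ → ℝ → ℝ
  | _, 0 => id
  | η, n + 1 => fun u => Smap α (η 0) (Siter α (fun k => η (k + 1)) n u)

namespace St10

lemma rad_pos {α : ℝ} (hα : α ∈ Set.Ioo (3/4 : ℝ) 1) : 0 < α ^ 2 + 2 * α - 2 := by
  obtain ⟨h1, h2⟩ := hα; nlinarith

lemma basic {α : ℝ} (hα : α ∈ Set.Ioo (3/4 : ℝ) 1) :
    (Real.sqrt (α ^ 2 + 2 * α - 2)) ^ 2 = α ^ 2 + 2 * α - 2 ∧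
    0 ≤ Real.sqrt (α ^ 2 + 2 * α - 2) ∧ Real.sqrt (α ^ 2 + 2 * α - 2) < α := by
  have h2 := Real.sq_sqrt (rad_pos hα).le
  have h0 := Real.sqrt_nonneg (α ^ 2 + 2 * α - 2)
  obtain ⟨ha1, ha2⟩ := hα
  exact ⟨h2, h0, by nlinarith⟩

lemma Tlip {α : ℝ} (hα : α ∈ Set.Ioo (3/4 : ℝ) 1) {ε : ℝ} (hε : ε = 1 ∨ ε = -1)
    {v : ℝ} (hv : v ∈ Set.Icc (-(theta0 α)) (theta0 α))
    {v' : ℝ} (hv' : v' ∈ Set.Icc (-(theta0 α)) (theta0 α)) :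
    |Tmap α ε v - Tmap α ε v'| ≤ kappa α * |v - v'| := by
  set s := Real.sqrt (α ^ 2 + 2 * α - 2) with hsdef
  obtain ⟨hs2, hs0, hsα⟩ := basic hα
  obtain ⟨ha1, ha2⟩ := hα
  have hεabs : |ε| = 1 := by rcases hε with h | h <;> simp [h]
  have hv1 : |v| ≤ α - s := abs_le.2 (by simpa [theta0] using hv)
  have hv1' : |v'| ≤ α - s := abs_le.2 (by simpa [theta0] using hv')
  have hεv : ε * v ≤ α - s := by
    calc ε * v ≤ |ε * v| := le_abs_self _
    _ = |v| := by rw [abs_mul, hεabs, one_mul]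
    _ ≤ α - s := hv1
  have hεv' : ε * v' ≤ α - s := by
    calc ε * v' ≤ |ε * v'| := le_abs_self _
    _ = |v'| := by rw [abs_mul, hεabs, one_mul]
    _ ≤ α - s := hv1'
  have hde : -2 * α + ε * v < 0 := by nlinarith
  have hde' : -2 * α + ε * v' < 0 := by nlinarith
  have hne : -2 * α + ε * v ≠ 0 := ne_of_lt hde
  have hne' : -2 * α + ε * v' ≠ 0 := ne_of_lt hde'
  have habsd : α + s ≤ |(-2 * α + ε * v)| := by rw [abs_of_neg hde]; linarith
  have habsd' : α + s ≤ |(-2 * α + ε * v')| := by rw [abs_of_neg hde']; linarith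
  have key : Tmap α ε v - Tmap α ε v' =
      2 * (1 - α) * (ε * (v' - v)) / ((-2 * α + ε * v) * (-2 * α + ε * v')) := by
    rw [Tmap, Tmap, div_sub_div _ _ hne hne']
    congr 1
    ring
  have h1α : (0:ℝ) < 1 - α := by linarith
  have h2a : 2 * (1 - α) = (α - s) * (α + s) := by linear_combination hs2
  have hαs : (0:ℝ) < α + s := by linarith
  have hnum : (0:ℝ) ≤ 2 * (1 - α) * |v - v'| :=
    mul_nonneg (by linarith) (abs_nonneg _)
  calc |Tmap α ε v - Tmap α ε v'|
      = 2 * (1 - α) * |v - v'| / (|(-2 * α + ε * v)| * |(-2 * α + ε * v')|) := by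
        rw [key, abs_div, abs_mul, abs_mul, abs_mul, abs_mul, hεabs, abs_sub_comm v' v,
          abs_of_pos h1α]
        norm_num
    _ ≤ 2 * (1 - α) * |v - v'| / ((α + s) * (α + s)) :=
        div_le_div_of_nonneg_left hnum (by nlinarith) (by nlinarith)
    _ = kappa α * |v - v'| := by
        rw [kappa, ← hsdef, h2a]
        field_simp

lemma Slip {α : ℝ} (hα : α ∈ Set.Ioo (3/4 : ℝ) 1) {ε : ℝ} (hε : ε = 1 ∨ ε = -1)
    {u : ℝ} (hu : 2 * |u| * (1 - α) ≤ theta0 α)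
    {u' : ℝ} (hu' : 2 * |u'| * (1 - α) ≤ theta0 α) :
    |Smap α ε u - Smap α ε u'| ≤ kappa α * |u - u'| := by
  set s := Real.sqrt (α ^ 2 + 2 * α - 2) with hsdef
  obtain ⟨hs2, hs0, hsα⟩ := basic hα
  obtain ⟨ha1, ha2⟩ := hα
  have hεabs : |ε| = 1 := by rcases hε with h | h <;> simp [h]
  have h1α : (0:ℝ) < 1 - α := by linarith
  have hu1 : 2 * |u| * (1 - α) ≤ α - s := by simpa [theta0] using hu
  have hu1' : 2 * |u'| * (1 - α) ≤ α - s := by simpa [theta0] using hu'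
  have hb : -(α - s) ≤ 2 * u * (1 - α) := by nlinarith [neg_abs_le u]
  have hb' : -(α - s) ≤ 2 * u' * (1 - α) := by nlinarith [neg_abs_le u']
  have hdp : α + s ≤ 2 * u * (1 - α) + 2 * α := by linarith
  have hdp' : α + s ≤ 2 * u' * (1 - α) + 2 * α := by linarith
  have hαs : (0:ℝ) < α + s := by linarith
  have hd0 : (0:ℝ) < 2 * u * (1 - α) + 2 * α := by linarith
  have hd0' : (0:ℝ) < 2 * u' * (1 - α) + 2 * α := by linarith
  have hne : 2 * u * (1 - α) + 2 * α ≠ 0 := ne_of_gt hd0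
  have hne' : 2 * u' * (1 - α) + 2 * α ≠ 0 := ne_of_gt hd0'
  have key : Smap α ε u - Smap α ε u' =
      ε * (2 * (1 - α) * (u' - u)) /
        ((2 * u * (1 - α) + 2 * α) * (2 * u' * (1 - α) + 2 * α)) := by
    unfold Smap; rw [div_sub_div _ _ hne hne']; ring
  have h2a : 2 * (1 - α) = (α - s) * (α + s) := by linear_combination hs2
  have hnum : (0:ℝ) ≤ 2 * (1 - α) * |u - u'| :=
    mul_nonneg (by linarith) (abs_nonneg _)
  calc |Smap α ε u - Smap α ε u'|
      = 2 * (1 - α) * |u - u'| /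
        ((2 * u * (1 - α) + 2 * α) * (2 * u' * (1 - α) + 2 * α)) := by
        rw [key, abs_div, abs_mul, abs_mul, abs_mul, abs_mul, hεabs, abs_sub_comm u' u,
          abs_of_pos h1α, abs_of_pos hd0, abs_of_pos hd0']
        norm_num
    _ ≤ 2 * (1 - α) * |u - u'| / ((α + s) * (α + s)) :=
        div_le_div_of_nonneg_left hnum (by nlinarith) (by nlinarith)
    _ = kappa α * |u - u'| := by
        rw [kappa, ← hsdef, h2a]
        field_simp

lemma Tinv {α : ℝ} (hα : α ∈ Set.Ioo (3/4 : ℝ) 1) {ε : ℝ} (hε : ε = 1 ∨ ε = -1)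
    {v : ℝ} (hv : v ∈ Set.Icc (-(theta0 α)) (theta0 α)) :
    Tmap α ε v ∈ Set.Icc (-(theta0 α)) (theta0 α) := by
  set s := Real.sqrt (α ^ 2 + 2 * α - 2) with hsdef
  obtain ⟨hs2, hs0, hsα⟩ := basic hα
  obtain ⟨ha1, ha2⟩ := hα
  have hεabs : |ε| = 1 := by rcases hε with h | h <;> simp [h]
  have hv1 : |v| ≤ α - s := abs_le.2 (by simpa [theta0] using hv)
  have hεv : ε * v ≤ α - s := by
    calc ε * v ≤ |ε * v| := le_abs_self _
    _ = |v| := by rw [abs_mul, hεabs, one_mul]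
    _ ≤ α - s := hv1
  have hde : -2 * α + ε * v < 0 := by nlinarith
  have h1α : (0:ℝ) < 1 - α := by linarith
  have habs : |Tmap α ε v| ≤ α - s := by
    rw [Tmap, abs_div, abs_of_pos (by positivity : (0:ℝ) < 2 * (1 - α)), abs_of_neg hde]
    rw [div_le_iff₀ (by linarith)]
    nlinarith
  have h := abs_le.1 habs
  constructor <;> simp only [theta0, ← hsdef] <;> linarith [h.1, h.2]

lemma Sinv {α : ℝ} (hα : α ∈ Set.Ioo (3/4 : ℝ) 1) {ε : ℝ} (hε : ε = 1 ∨ ε = -1)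
    {u : ℝ} (hu : 2 * |u| * (1 - α) ≤ theta0 α) :
    2 * |Smap α ε u| * (1 - α) ≤ theta0 α := by
  set s := Real.sqrt (α ^ 2 + 2 * α - 2) with hsdef
  obtain ⟨hs2, hs0, hsα⟩ := basic hα
  obtain ⟨ha1, ha2⟩ := hα
  have hεabs : |ε| = 1 := by rcases hε with h | h <;> simp [h]
  have h1α : (0:ℝ) < 1 - α := by linarith
  have hu1 : 2 * |u| * (1 - α) ≤ α - s := by simpa [theta0] using hu
  have hb : -(α - s) ≤ 2 * u * (1 - α) := by nlinarith [neg_abs_le u]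
  have hdp : α + s ≤ 2 * u * (1 - α) + 2 * α := by linarith
  have hαs : (0:ℝ) < α + s := by linarith
  have hd0 : (0:ℝ) < 2 * u * (1 - α) + 2 * α := by linarith
  have habs : |Smap α ε u| ≤ 1 / (α + s) := by
    rw [Smap, abs_div, hεabs, abs_of_pos hd0]
    exact div_le_div_of_nonneg_left (by norm_num) hαs hdp
  have hfin : 2 * (1 / (α + s)) * (1 - α) = α - s := by
    field_simp
    linear_combination hs2
  have h2 : 2 * |Smap α ε u| * (1 - α) ≤ 2 * (1 / (α + s)) * (1 - α) := by nlinarith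
  simp only [theta0, ← hsdef]
  linarith

end St10

namespace St10

lemma kappa_nonneg {α : ℝ} (hα : α ∈ Set.Ioo (3/4 : ℝ) 1) : 0 ≤ kappa α := by
  obtain ⟨hs2, hs0, hsα⟩ := basic hα
  obtain ⟨ha1, ha2⟩ := hα
  have h1 : (0:ℝ) ≤ α - Real.sqrt (α ^ 2 + 2 * α - 2) := by linarith
  have h2 : (0:ℝ) < α + Real.sqrt (α ^ 2 + 2 * α - 2) := by linarith
  exact div_nonneg h1 h2.le

lemma Titer_mem {α : ℝ} (hα : α ∈ Set.Ioo (3/4 : ℝ) 1) :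
    ∀ (n : ℕ) (ε : ℕ → ℝ), (∀ k, ε k = 1 ∨ ε k = -1) →
    ∀ v ∈ Set.Icc (-(theta0 α)) (theta0 α), Titer α ε n v ∈ Set.Icc (-(theta0 α)) (theta0 α) := by
  intro n
  induction n with
  | zero => intro ε hε v hv; simpa [Titer] using hv
  | succ n ih =>
    intro ε hε v hv
    exact Tinv hα (hε 0) (ih (fun k => ε (k + 1)) (fun k => hε (k + 1)) v hv)

lemma Siter_mem {α : ℝ} (hα : α ∈ Set.Ioo (3/4 : ℝ) 1) :
    ∀ (n : ℕ) (ε : ℕ → ℝ), (∀ k, ε k = 1 ∨ ε k = -1) →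
    ∀ u, 2 * |u| * (1 - α) ≤ theta0 α → 2 * |Siter α ε n u| * (1 - α) ≤ theta0 α := by
  intro n
  induction n with
  | zero => intro ε hε u hu; simpa [Siter] using hu
  | succ n ih =>
    intro ε hε u hu
    exact Sinv hα (hε 0) (ih (fun k => ε (k + 1)) (fun k => hε (k + 1)) u hu)

lemma Titer_lip {α : ℝ} (hα : α ∈ Set.Ioo (3/4 : ℝ) 1) :
    ∀ (n : ℕ) (ε : ℕ → ℝ), (∀ k, ε k = 1 ∨ ε k = -1) →
    ∀ v ∈ Set.Icc (-(theta0 α)) (theta0 α), ∀ v' ∈ Set.Icc (-(theta0 α)) (theta0 α),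
    |Titer α ε n v - Titer α ε n v'| ≤ kappa α ^ n * |v - v'| := by
  intro n
  induction n with
  | zero => intro ε hε v hv v' hv'; simp [Titer]
  | succ n ih =>
    intro ε hε v hv v' hv'
    have ha := Titer_mem hα n (fun k => ε (k + 1)) (fun k => hε (k + 1)) v hv
    have hb := Titer_mem hα n (fun k => ε (k + 1)) (fun k => hε (k + 1)) v' hv'
    calc |Titer α ε (n + 1) v - Titer α ε (n + 1) v'|
        ≤ kappa α * |Titer α (fun k => ε (k + 1)) n v - Titer α (fun k => ε (k + 1)) n v'| :=
          Tlip hα (hε 0) ha hb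
      _ ≤ kappa α * (kappa α ^ n * |v - v'|) := by
          have := ih (fun k => ε (k + 1)) (fun k => hε (k + 1)) v hv v' hv'
          exact mul_le_mul_of_nonneg_left this (kappa_nonneg hα)
      _ = kappa α ^ (n + 1) * |v - v'| := by ring

lemma Siter_lip {α : ℝ} (hα : α ∈ Set.Ioo (3/4 : ℝ) 1) :
    ∀ (n : ℕ) (ε : ℕ → ℝ), (∀ k, ε k = 1 ∨ ε k = -1) →
    ∀ u, 2 * |u| * (1 - α) ≤ theta0 α → ∀ u', 2 * |u'| * (1 - α) ≤ theta0 α →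
    |Siter α ε n u - Siter α ε n u'| ≤ kappa α ^ n * |u - u'| := by
  intro n
  induction n with
  | zero => intro ε hε u hu u' hu'; simp [Siter]
  | succ n ih =>
    intro ε hε u hu u' hu'
    have ha := Siter_mem hα n (fun k => ε (k + 1)) (fun k => hε (k + 1)) u hu
    have hb := Siter_mem hα n (fun k => ε (k + 1)) (fun k => hε (k + 1)) u' hu'
    calc |Siter α ε (n + 1) u - Siter α ε (n + 1) u'|
        ≤ kappa α * |Siter α (fun k => ε (k + 1)) n u - Siter α (fun k => ε (k + 1)) n u'| :=
          Slip hα (hε 0) ha hb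
      _ ≤ kappa α * (kappa α ^ n * |u - u'|) := by
          have := ih (fun k => ε (k + 1)) (fun k => hε (k + 1)) u hu u' hu'
          exact mul_le_mul_of_nonneg_left this (kappa_nonneg hα)
      _ = kappa α ^ (n + 1) * |u - u'| := by ring

end St10

/-- each `T_ε` is κ-Lipschitz on `J₋ = [−θ₀, θ₀]` and each `S_ε` is
κ-Lipschitz on `J₊ = {u : 2|u|(1−α) ≤ θ₀}`; consequently every `n`-fold composition
`T_{ε₀}∘⋯∘T_{ε_{n−1}}` (resp. `S_{ε₀}∘⋯∘S_{ε_{n−1}}`) is `κⁿ`-Lipschitz on `J₋`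
(resp. on `J₊`). -/
theorem statement10 (α : ℝ) (hα : α ∈ Set.Ioo (3/4 : ℝ) 1) :
    (∀ ε : ℝ, ε = 1 ∨ ε = -1 →
      (∀ v ∈ Set.Icc (-(theta0 α)) (theta0 α), ∀ v' ∈ Set.Icc (-(theta0 α)) (theta0 α),
        |Tmap α ε v - Tmap α ε v'| ≤ kappa α * |v - v'|) ∧
      (∀ u ∈ {u : ℝ | 2 * |u| * (1 - α) ≤ theta0 α},
        ∀ u' ∈ {u : ℝ | 2 * |u| * (1 - α) ≤ theta0 α},
        |Smap α ε u - Smap α ε u'| ≤ kappa α * |u - u'|)) ∧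
    (∀ n : ℕ, 1 ≤ n → ∀ ε : ℕ → ℝ, (∀ k, ε k = 1 ∨ ε k = -1) →
      (∀ v ∈ Set.Icc (-(theta0 α)) (theta0 α), ∀ v' ∈ Set.Icc (-(theta0 α)) (theta0 α),
        |Titer α ε n v - Titer α ε n v'| ≤ kappa α ^ n * |v - v'|) ∧
      (∀ u ∈ {u : ℝ | 2 * |u| * (1 - α) ≤ theta0 α},
        ∀ u' ∈ {u : ℝ | 2 * |u| * (1 - α) ≤ theta0 α},
        |Siter α ε n u - Siter α ε n u'| ≤ kappa α ^ n * |u - u'|)) := by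
  refine ⟨fun ε hε => ⟨fun v hv v' hv' => St10.Tlip hα hε hv hv',
    fun u hu u' hu' => St10.Slip hα hε hu hu'⟩,
    fun n _ ε hε => ⟨fun v hv v' hv' => St10.Titer_lip hα n ε hε v hv v' hv',
    fun u hu u' hu' => St10.Siter_lip hα n ε hε u hu u' hu'⟩⟩
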